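/- Let n ≥ 2 and let X be a trace-zero n×n complex matrix. Viewing ad X as the linear endomorphism Y ↦ XY − YX of the space sl(n,ℂ) of trace-zero n×n complex matrices, the trace of (ad X)⁴ as an endomorphism of sl(n,ℂ) equals 2n·tr(X⁴) + 6·(tr(X²))². -/

import Mathlib

open LinearMap Matrix in
lemma stdBasis_repr_apply' {n : ℕ} (M : Matrix (Fin n) (Fin n) ℂ) (ij : Fin n × Fin n) :
    (Matrix.stdBasis ℂ (Fin n) (Fin n)).repr M ij = M ij.1 ij.2 := by
  simp [Matrix.stdBasis, Module.Basis.map_repr, Module.Basis.repr_reindex, Pi.basis_repr]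

open LinearMap Matrix in
lemma myStdBasis_apply {n : ℕ} (p : Fin n × Fin n) :
    Matrix.stdBasis ℂ (Fin n) (Fin n) p = Matrix.single p.1 p.2 1 := by
  obtain ⟨i, j⟩ := p; exact Matrix.stdBasis_eq_single ℂ i j

open LinearMap Matrix in
lemma trace_mulLR {n : ℕ} (A B : Matrix (Fin n) (Fin n) ℂ) :
    LinearMap.trace ℂ _ (LinearMap.mulLeft ℂ A * LinearMap.mulRight ℂ B) = A.trace * B.trace := by
  rw [LinearMap.trace_eq_matrix_trace ℂ (Matrix.stdBasis ℂ (Fin n) (Fin n))]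
  rw [Matrix.trace]
  simp only [Matrix.diag, LinearMap.toMatrix_apply, myStdBasis_apply,
    Module.End.mul_apply, LinearMap.mulLeft_apply, LinearMap.mulRight_apply,
    stdBasis_repr_apply']
  have key : ∀ p : Fin n × Fin n, ((A * Matrix.single p.1 p.2 1 * B : Matrix (Fin n) (Fin n) ℂ)) p.1 p.2
      = A p.1 p.1 * B p.2 p.2 := by
    intro p
    simp [Matrix.mul_apply, Matrix.single, ite_and, Finset.mul_sum]
  simp only [← mul_assoc]
  rw [Fintype.sum_congr _ _ key]
  rw [Matrix.trace, Matrix.trace, Finset.sum_mul_sum, ← Finset.sum_product']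
  rfl

attribute [local instance 100] LieRing.ofAssociativeRing

open LieAlgebra LieAlgebra.SpecialLinear in
/-- For `n ≥ 2` and a trace-zero `n×n` complex matrix `X`, the trace of `(ad X)⁴` as an
endomorphism of `sl(n,ℂ)` equals `2n·tr(X⁴) + 6·(tr(X²))²`. -/
theorem sl_adjoint_quartic_trace (n : ℕ) (hn : 2 ≤ n)
    (X : Matrix (Fin n) (Fin n) ℂ) (hX : X.trace = 0) :
    LinearMap.trace ℂ (sl (Fin n) ℂ)
        ((ad ℂ (sl (Fin n) ℂ) ⟨X, hX⟩) ^ 4) =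
      2 * n * (X ^ 4).trace + 6 * (X ^ 2).trace ^ 2 := by
  set l := LinearMap.mulLeft ℂ X with hl
  set r := LinearMap.mulRight ℂ X with hr
  set D : Module.End ℂ (Matrix (Fin n) (Fin n) ℂ) := l - r with hD
  have htr : ∀ Y, (D Y).trace = 0 := by
    intro Y
    have h : D Y = X * Y - Y * X := rfl
    rw [h, Matrix.trace_sub, Matrix.trace_mul_comm, sub_self]
  have hmem : ∀ Y, (D ^ 4) Y ∈ (sl (Fin n) ℂ).toSubmodule := by
    intro Y
    have : (D ^ 4) Y = D ((D ^ 3) Y) := by rw [pow_succ]; rfl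
    show (D ^ 4) Y ∈ LinearMap.ker (Matrix.traceLinearMap (Fin n) ℂ ℂ)
    rw [LinearMap.mem_ker, this]
    exact htr _
  have hrestrict : LinearMap.trace ℂ _ ((D ^ 4).restrict (fun x _ => hmem x))
      = LinearMap.trace ℂ _ (D ^ 4) :=
    LinearMap.trace_restrict_eq_of_forall_mem _ _ hmem
  have key : ∀ y : sl (Fin n) ℂ, ((ad ℂ (sl (Fin n) ℂ) ⟨X, hX⟩) y).val = D y.val := by
    intro y
    simp [ad_apply, hD, hl, hr]
    rfl
  have heq : ((ad ℂ (sl (Fin n) ℂ) ⟨X, hX⟩) ^ 4)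
      = (D ^ 4).restrict (fun x _ => hmem x) := by
    apply LinearMap.ext
    intro y
    apply Subtype.ext
    show (((ad ℂ (sl (Fin n) ℂ) ⟨X, hX⟩) ^ 4) y).val = ((D ^ 4).restrict (fun x _ => hmem x) y).val
    rw [LinearMap.restrict_apply]
    simp only [pow_succ, pow_zero, Module.End.mul_apply, Module.End.one_apply, key]
  have main : LinearMap.trace ℂ _ (D ^ 4) = 2 * n * (X ^ 4).trace + 6 * (X ^ 2).trace ^ 2 := by
    have hc : Commute l (-r) := (LinearMap.commute_mulLeft_right (R := ℂ) X X).neg_right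
    have expand : D ^ 4 = ∑ m ∈ Finset.range 5, l ^ m * (-r) ^ (4 - m) * (Nat.choose 4 m : Module.End ℂ (Matrix (Fin n) (Fin n) ℂ)) := by
      rw [hD, sub_eq_add_neg, Commute.add_pow hc]
    rw [expand, map_sum]
    simp only [Finset.sum_range_succ, Finset.sum_range_zero, zero_add]
    have tterm : ∀ a b c : ℕ, LinearMap.trace ℂ (Matrix (Fin n) (Fin n) ℂ)
        (l ^ a * (-r) ^ b * (Nat.choose 4 c : Module.End ℂ (Matrix (Fin n) (Fin n) ℂ)))
        = (-1 : ℂ) ^ b * (Nat.choose 4 c : ℂ) * ((X ^ a).trace * (X ^ b).trace) := by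
      intro a b c
      have h1 : (-r) ^ b = ((-1 : ℂ) ^ b) • r ^ b := by
        rw [← neg_one_smul ℂ r, smul_pow]
      have h2 : ((Nat.choose 4 c : ℕ) : Module.End ℂ (Matrix (Fin n) (Fin n) ℂ))
          = ((Nat.choose 4 c : ℂ)) • 1 := by
        rw [← map_natCast (algebraMap ℂ (Module.End ℂ (Matrix (Fin n) (Fin n) ℂ))),
          Algebra.algebraMap_eq_smul_one]
      rw [h1, h2]
      simp only [mul_smul_comm, smul_mul_assoc, mul_one, smul_smul, map_smul]
      rw [hl, hr, LinearMap.pow_mulLeft, LinearMap.pow_mulRight, trace_mulLR]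
      rw [smul_eq_mul]
      ring
    simp only [tterm]
    have h0 : ((X ^ 0 : Matrix (Fin n) (Fin n) ℂ)).trace = (n : ℂ) := by
      rw [pow_zero, Matrix.trace_one]
      simp
    norm_num [h0, pow_one, hX, Nat.choose]
    ring
  rw [heq]
  exact hrestrict.trans main
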